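/- A discrete group Γ has property (T) in the classical sense (there exists a Kazhdan pair (Q, c) with Q finite) if and only if there exist a finite subset K of Γ and c > 0 such that K is a groupoid-Kazhdan set with constant c. (Corollary: a discrete group has property (T) in the groupoid sense of the paper if and only if it has it in the classical sense.) -/

import Mathlib

open scoped InnerProductSpace

noncomputable section

/-- A classical Kazhdan pair for a discrete group `Γ`: every unitary representation
admitting a `(Q, c)`-almost-invariant unit vector has a nonzero invariant vector. -/
def IsKazhdanPair (Γ : Type) [Group Γ] (Q : Set Γ) (c : ℝ) : Prop :=
  ∀ (H : Type) [NormedAddCommGroup H] [InnerProductSpace ℂ H] [CompleteSpace H]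
    (u : Γ →* unitary (H →L[ℂ] H)),
    (∃ ξ : H, ‖ξ‖ = 1 ∧ ∀ g ∈ Q, ‖(u g : H →L[ℂ] H) ξ - ξ‖ < c) →
    ∃ η : H, η ≠ 0 ∧ ∀ g : Γ, (u g : H →L[ℂ] H) η = η

/-- A groupoid-Kazhdan set with constant `c`: for every unitary representation and every
vector `ξ` orthogonal to the invariant vectors there is a finitely supported
`f : Γ → ℂ` supported in `K` with `ℓ¹`-norm at most one such that
`‖Σ_g f(g) u_g ξ − (Σ_g f(g)) ξ‖ ≥ c ‖ξ‖`. -/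
def IsGroupoidKazhdanSet (Γ : Type) [Group Γ] (K : Set Γ) (c : ℝ) : Prop :=
  ∀ (H : Type) [NormedAddCommGroup H] [InnerProductSpace ℂ H] [CompleteSpace H]
    (u : Γ →* unitary (H →L[ℂ] H)) (ξ : H),
    (∀ η : H, (∀ g : Γ, (u g : H →L[ℂ] H) η = η) → (inner ℂ η ξ : ℂ) = 0) →
    ∃ f : Γ →₀ ℂ,
      (f.support : Set Γ) ⊆ K ∧ (∑ g ∈ f.support, ‖f g‖) ≤ 1 ∧
      c * ‖ξ‖ ≤ ‖(∑ g ∈ f.support, f g • ((u g : H →L[ℂ] H) ξ)) - (∑ g ∈ f.support, f g) • ξ‖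

section Aux

variable {Γ : Type} [Group Γ] {H : Type} [NormedAddCommGroup H]
  [InnerProductSpace ℂ H] [CompleteSpace H] (u : Γ →* unitary (H →L[ℂ] H))

/-- The submodule of invariant vectors. -/
def invSub : Submodule ℂ H where
  carrier := {η | ∀ g : Γ, (u g : H →L[ℂ] H) η = η}
  add_mem' := by intro a b ha hb g; simp [map_add, ha g, hb g]
  zero_mem' := by intro g; simp
  smul_mem' := by intro c x hx g; simp [map_smul, hx g]

lemma coe_inv_apply (g : Γ) (x : H) :
    (u g⁻¹ : H →L[ℂ] H) x = ContinuousLinearMap.adjoint (u g : H →L[ℂ] H) x := by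
  rw [← ContinuousLinearMap.star_eq_adjoint]
  rw [map_inv, ← Unitary.star_eq_inv, Unitary.coe_star]

lemma maps_orth (g : Γ) (x : H) (hx : x ∈ (invSub u)ᗮ) :
    (u g : H →L[ℂ] H) x ∈ (invSub u)ᗮ := by
  rw [Submodule.mem_orthogonal]
  intro v hv
  have : (inner ℂ v ((u g : H →L[ℂ] H) x) : ℂ)
      = inner ℂ ((u g⁻¹ : H →L[ℂ] H) v) x := by
    rw [coe_inv_apply, ContinuousLinearMap.adjoint_inner_left]
  rw [this, hv g⁻¹]
  exact (Submodule.mem_orthogonal _ _).1 hx v hv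

/-- Restriction of the representation to the orthogonal complement of invariants. -/
def restrT (g : Γ) : (invSub u)ᗮ →L[ℂ] (invSub u)ᗮ :=
  ((u g : H →L[ℂ] H).comp (invSub u)ᗮ.subtypeL).codRestrict (invSub u)ᗮ
    (fun x => maps_orth u g x.1 x.2)

@[simp] lemma restrT_coe (g : Γ) (x : (invSub u)ᗮ) :
    (restrT u g x : H) = (u g : H →L[ℂ] H) x := rfl

lemma restrT_mul (g h : Γ) : restrT u (g * h) = restrT u g * restrT u h := by
  refine ContinuousLinearMap.ext fun x => Subtype.ext ?_
  rw [restrT_coe, map_mul u g h]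
  rfl

lemma restrT_one : restrT u 1 = 1 := by
  refine ContinuousLinearMap.ext fun x => Subtype.ext ?_
  rw [restrT_coe, map_one u]
  rfl

lemma restrT_adjoint (g : Γ) :
    restrT u g⁻¹ = ContinuousLinearMap.adjoint (restrT u g) := by
  rw [ContinuousLinearMap.eq_adjoint_iff]
  intro x y
  rw [Submodule.coe_inner, Submodule.coe_inner, restrT_coe, restrT_coe,
    coe_inv_apply, ContinuousLinearMap.adjoint_inner_left]

lemma restrT_unitary (g : Γ) : restrT u g ∈ unitary ((invSub u)ᗮ →L[ℂ] (invSub u)ᗮ) := by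
  constructor
  · rw [ContinuousLinearMap.star_eq_adjoint, ← restrT_adjoint, ← restrT_mul,
      inv_mul_cancel, restrT_one]
  · rw [ContinuousLinearMap.star_eq_adjoint, ← restrT_adjoint, ← restrT_mul,
      mul_inv_cancel, restrT_one]

/-- The restricted representation as a homomorphism to the unitary group. -/
def restrU : Γ →* unitary ((invSub u)ᗮ →L[ℂ] (invSub u)ᗮ) where
  toFun g := ⟨restrT u g, restrT_unitary u g⟩
  map_one' := by ext1; exact restrT_one u
  map_mul' g h := by ext1; exact restrT_mul u g h

end Aux

/-- A discrete group has property (T) in the classical sense (a Kazhdan pair `(Q, c)` with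
`Q` finite) if and only if there exist a finite subset `K` and `c > 0` such that `K` is a
groupoid-Kazhdan set with constant `c`. -/
theorem propertyT_iff_groupoid_propertyT (Γ : Type) [Group Γ] :
    (∃ (Q : Set Γ) (c : ℝ), Q.Finite ∧ 0 < c ∧ IsKazhdanPair Γ Q c) ↔
    (∃ (K : Set Γ) (c : ℝ), K.Finite ∧ 0 < c ∧ IsGroupoidKazhdanSet Γ K c) := by
  constructor
  · rintro ⟨Q, c, hQfin, hc, hKP⟩
    refine ⟨Q, c, hQfin, hc, ?_⟩
    intro H _ _ _ u ξ hξ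
    have hξmem : ξ ∈ (invSub u)ᗮ :=
      (Submodule.mem_orthogonal _ _).2 fun v hv => hξ v hv
    by_cases hz : ξ = 0
    · refine ⟨0, by simp, by simp, ?_⟩
      simp [hz]
    · have hg : ∃ g ∈ Q, c * ‖ξ‖ ≤ ‖(u g : H →L[ℂ] H) ξ - ξ‖ := by
        by_contra hcon
        push_neg at hcon
        have hξnorm : ‖ξ‖ ≠ 0 := norm_ne_zero_iff.2 hz
        set ξ' : (invSub u)ᗮ := ⟨ξ, hξmem⟩ with hξ'
        set ξ₀ : (invSub u)ᗮ := ((‖ξ‖ : ℂ))⁻¹ • ξ' with hξ₀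
        have hnorm1 : ‖ξ₀‖ = 1 := by
          rw [hξ₀, norm_smul, norm_inv, Complex.norm_real, Real.norm_eq_abs,
            abs_norm]
          have : ‖ξ'‖ = ‖ξ‖ := rfl
          rw [this, inv_mul_cancel₀ hξnorm]
        have hsmall : ∀ g ∈ Q, ‖(restrU u g : _ →L[ℂ] _) ξ₀ - ξ₀‖ < c := by
          intro g hgQ
          have h1 : (restrU u g : _ →L[ℂ] _) ξ₀ - ξ₀
              = ((‖ξ‖ : ℂ))⁻¹ • (restrT u g ξ' - ξ') := by
            rw [hξ₀, map_smul, smul_sub]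
            rfl
          have h2 : ‖restrT u g ξ' - ξ'‖ = ‖(u g : H →L[ℂ] H) ξ - ξ‖ := rfl
          rw [h1, norm_smul, norm_inv, Complex.norm_real, Real.norm_eq_abs,
            abs_norm, h2]
          calc ‖ξ‖⁻¹ * ‖(u g : H →L[ℂ] H) ξ - ξ‖
              < ‖ξ‖⁻¹ * (c * ‖ξ‖) := by
                exact mul_lt_mul_of_pos_left (hcon g hgQ)
                  (inv_pos.2 (norm_pos_iff.2 hz))
            _ = c := by field_simp
        obtain ⟨η, hη0, hηinv⟩ := hKP _ (restrU u) ⟨ξ₀, hnorm1, hsmall⟩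
        have hmem : (η : H) ∈ invSub u := by
          intro g
          have := congrArg Subtype.val (hηinv g)
          exact this
        have : (η : H) = 0 := by
          have h0 : (inner ℂ (η : H) (η : H) : ℂ) = 0 :=
            (Submodule.mem_orthogonal _ _).1 η.2 _ hmem
          exact inner_self_eq_zero.1 h0
        exact hη0 (Subtype.ext this)
      obtain ⟨g, hgQ, hgbig⟩ := hg
      refine ⟨Finsupp.single g 1, ?_, ?_, ?_⟩
      · rw [Finsupp.support_single_ne_zero g one_ne_zero]
        simpa using hgQ
      · rw [Finsupp.support_single_ne_zero g one_ne_zero]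
        simp
      · rw [Finsupp.support_single_ne_zero g one_ne_zero]
        simpa using hgbig
  · rintro ⟨K, c, hKfin, hc, hGK⟩
    refine ⟨K, c, hKfin, hc, ?_⟩
    intro H _ _ _ u ⟨ξ, hξ1, hsm⟩
    by_contra hno
    push_neg at hno
    have horth : ∀ η : H, (∀ g : Γ, (u g : H →L[ℂ] H) η = η) → (inner ℂ η ξ : ℂ) = 0 := by
      intro η hη
      by_cases h : η = 0
      · simp [h]
      · obtain ⟨g, hg⟩ := hno η h
        exact absurd (hη g) hg
    obtain ⟨f, hsupp, hnorm1, hbig⟩ := hGK H u ξ horth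
    rw [hξ1, mul_one] at hbig
    have hS : (∑ g ∈ f.support, f g • ((u g : H →L[ℂ] H) ξ)) - (∑ g ∈ f.support, f g) • ξ
        = ∑ g ∈ f.support, f g • ((u g : H →L[ℂ] H) ξ - ξ) := by
      rw [Finset.sum_smul]
      rw [← Finset.sum_sub_distrib]
      congr 1
      ext g
      rw [smul_sub]
    rw [hS] at hbig
    rcases Finset.eq_empty_or_nonempty f.support with he | hne
    · rw [he] at hbig
      simp at hbig
      linarith
    · have hlt : ‖∑ g ∈ f.support, f g • ((u g : H →L[ℂ] H) ξ - ξ)‖ < c := by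
        calc ‖∑ g ∈ f.support, f g • ((u g : H →L[ℂ] H) ξ - ξ)‖
            ≤ ∑ g ∈ f.support, ‖f g • ((u g : H →L[ℂ] H) ξ - ξ)‖ :=
              norm_sum_le _ _
          _ = ∑ g ∈ f.support, ‖f g‖ * ‖(u g : H →L[ℂ] H) ξ - ξ‖ := by
              simp [norm_smul]
          _ < ∑ g ∈ f.support, ‖f g‖ * c := by
              refine Finset.sum_lt_sum_of_nonempty hne fun g hg => ?_
              have hfg : ‖f g‖ > 0 :=
                norm_pos_iff.2 (Finsupp.mem_support_iff.1 hg)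
              exact mul_lt_mul_of_pos_left (hsm g (hsupp hg)) hfg
          _ = (∑ g ∈ f.support, ‖f g‖) * c := by rw [Finset.sum_mul]
          _ ≤ 1 * c := mul_le_mul_of_nonneg_right hnorm1 hc.le
          _ = c := one_mul c
      linarith

end
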